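/- (Non-asymptotic accelerated local linear rate of heavy ball) Let f : ℝ^d → ℝ be twice continuously differentiable, μ-strongly convex and α-smooth with 0 < μ ≤ α, and suppose its Hessian is α-Lipschitz. Let κ := α/μ and let w* be the unique minimizer of f. Run Polyak's heavy-ball method with step size η = 1/α and momentum parameter β = (1 − 1/(2√κ))² from initial points w₀, w₋₁ satisfying ‖(w₀ − w*; w₋₁ − w*)‖ ≤ 1/(683 κ^{3/2}). Then for all t ≥ 0, ‖(w_{t+1} − w*; w_t − w*)‖ ≤ (1 − 1/(4√κ))^{t+1} · 8√κ · ‖(w₀ − w*; w₋₁ − w*)‖. -/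

import Mathlib

open Finset in
private lemma hb_cs_sum {d : ℕ} (s e : Fin d → ℝ) :
    ∑ i, s i * e i ≤ Real.sqrt (∑ i, (s i)^2) * Real.sqrt (∑ i, (e i)^2) := by
  have h := Finset.sum_mul_sq_le_sq_mul_sq Finset.univ s e
  calc ∑ i, s i * e i ≤ |∑ i, s i * e i| := le_abs_self _
    _ = Real.sqrt ((∑ i, s i * e i)^2) := (Real.sqrt_sq_eq_abs _).symm
    _ ≤ Real.sqrt ((∑ i, (s i)^2) * ∑ i, (e i)^2) := Real.sqrt_le_sqrt h
    _ = _ := Real.sqrt_mul (by positivity) _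

private lemma hb_minkowski {d : ℕ} (s e w : Fin d → ℝ) :
    Real.sqrt (∑ i, ((s i + e i)^2 + (w i)^2))
      ≤ Real.sqrt (∑ i, ((s i)^2 + (w i)^2)) + Real.sqrt (∑ i, (e i)^2) := by
  set A := Real.sqrt (∑ i, ((s i)^2 + (w i)^2)) with hA
  set E := Real.sqrt (∑ i, (e i)^2) with hE
  have hA0 : 0 ≤ A := Real.sqrt_nonneg _
  have hE0 : 0 ≤ E := Real.sqrt_nonneg _
  have hA2 : A^2 = ∑ i, ((s i)^2 + (w i)^2) := Real.sq_sqrt (by positivity)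
  have hE2 : E^2 = ∑ i, (e i)^2 := Real.sq_sqrt (by positivity)
  have hs_le : Real.sqrt (∑ i, (s i)^2) ≤ A := by
    apply Real.sqrt_le_sqrt
    exact Finset.sum_le_sum fun i _ => le_add_of_nonneg_right (sq_nonneg _)
  have hse : ∑ i, s i * e i ≤ A * E := by
    calc ∑ i, s i * e i ≤ Real.sqrt (∑ i, (s i)^2) * Real.sqrt (∑ i, (e i)^2) := hb_cs_sum s e
      _ ≤ A * E := by apply mul_le_mul_of_nonneg_right hs_le hE0
  have hexp : ∑ i, ((s i + e i)^2 + (w i)^2)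
      = (∑ i, ((s i)^2 + (w i)^2)) + 2*(∑ i, s i * e i) + ∑ i, (e i)^2 := by
    have h : ∀ i : Fin d, (s i + e i)^2 + (w i)^2
        = ((s i)^2 + (w i)^2) + 2*(s i * e i) + (e i)^2 := fun i => by ring
    simp_rw [h]
    rw [Finset.sum_add_distrib, Finset.sum_add_distrib, Finset.mul_sum]
  have hle : ∑ i, ((s i + e i)^2 + (w i)^2) ≤ (A + E)^2 := by
    rw [hexp]; nlinarith [hse, hA2, hE2]
  calc Real.sqrt (∑ i, ((s i + e i)^2 + (w i)^2)) ≤ Real.sqrt ((A+E)^2) := Real.sqrt_le_sqrt hle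
    _ = A + E := Real.sqrt_sq (by positivity)

private lemma hb_alg_rot (r cc u v : ℝ) (hD : 0 < r^2 - cc^2) :
    ((cc*u - r^2*v)/Real.sqrt (r^2-cc^2))^2 + u^2
      = r^2 * (((u - cc*v)/Real.sqrt (r^2-cc^2))^2 + v^2) := by
  have hs : Real.sqrt (r^2-cc^2)^2 = r^2-cc^2 := Real.sq_sqrt hD.le
  rw [div_pow, div_pow, hs]
  have hne : r^2 - cc^2 ≠ 0 := hD.ne'
  field_simp
  ring

private lemma hb_alg_lower (cc Dv u v : ℝ) (hD : 0 < Dv) (hcD : cc^2 + Dv ≤ 1) :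
    (u^2 + v^2)/2 ≤ (u - cc*v)^2/Dv + v^2 := by
  have h2D : 0 < 2 - Dv := by nlinarith [sq_nonneg cc]
  have key : Dv * ((u^2+v^2)/2) ≤ (u - cc*v)^2 + Dv * v^2 := by
    have h1 : (0:ℝ) ≤ ((2-Dv)*u - 2*cc*v)^2 := sq_nonneg _
    have h2 : (0:ℝ) ≤ Dv*(2-2*cc^2-Dv)*v^2 := by
      apply mul_nonneg (mul_nonneg hD.le (by nlinarith)) (sq_nonneg _)
    nlinarith [h1, h2, h2D]
  calc (u^2+v^2)/2 = (Dv * ((u^2+v^2)/2))/Dv := by field_simp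
    _ ≤ ((u - cc*v)^2 + Dv*v^2)/Dv := by gcongr
    _ = (u-cc*v)^2/Dv + v^2 := by field_simp

private lemma hb_alg_upper (cc Dv d0 u v : ℝ) (h0 : 0 < d0) (hd0D : d0 ≤ Dv) (hc1 : cc^2 ≤ 1)
    (hd01 : d0 ≤ 1) :
    (u - cc*v)^2/Dv + v^2 ≤ 3/d0 * (u^2+v^2) := by
  have h1 : (u - cc*v)^2/Dv ≤ (u-cc*v)^2/d0 :=
    div_le_div_of_nonneg_left (sq_nonneg _) h0 hd0D
  have h2 : v^2 ≤ v^2/d0 := by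
    rw [le_div_iff₀ h0]; nlinarith [sq_nonneg v]
  have h3 : (u-cc*v)^2 + v^2 ≤ 3*(u^2+v^2) := by nlinarith [sq_nonneg (u+cc*v), sq_nonneg v]
  calc (u - cc*v)^2/Dv + v^2 ≤ (u-cc*v)^2/d0 + v^2/d0 := add_le_add h1 h2
    _ = ((u-cc*v)^2 + v^2)/d0 := by ring
    _ ≤ (3*(u^2+v^2))/d0 := by gcongr
    _ = 3/d0 * (u^2+v^2) := by ring

set_option maxHeartbeats 2000000 in
private lemma hb_core {dd : ℕ} (δ : ℝ) (hδ0 : 0 < δ) (hδ2 : δ ≤ 1/2)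
    (lam : Fin dd → ℝ) (hlam1 : ∀ i, 4*δ^2 ≤ lam i) (hlam2 : ∀ i, lam i ≤ 1)
    (x g : ℕ → Fin dd → ℝ)
    (hrecx : ∀ t i, x (t+2) i = (1 + (1-δ)^2 - lam i) * x (t+1) i - (1-δ)^2 * x t i - g t i)
    (hg : ∀ t, Real.sqrt (∑ i, (g t i)^2) ≤ ∑ i, (x (t+1) i)^2)
    (hinit : Real.sqrt ((∑ i, (x 1 i)^2) + (∑ i, (x 0 i)^2)) ≤ 8*δ^3/683) :
    ∀ t, Real.sqrt ((∑ i, (x (t+2) i)^2) + (∑ i, (x (t+1) i)^2))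
      ≤ (1-δ/2)^(t+1) * (4/δ) * Real.sqrt ((∑ i, (x 1 i)^2) + (∑ i, (x 0 i)^2)) := by
  set r : ℝ := 1 - δ with hrdef
  have hr2 : 1/2 ≤ r := by rw [hrdef]; linarith
  have hr1 : r ≤ 1 := by rw [hrdef]; linarith
  set c : Fin dd → ℝ := fun i => (1 + r^2 - lam i)/2 with hcdef
  set D : Fin dd → ℝ := fun i => r^2 - (c i)^2 with hDdef
  set d0 : ℝ := 15/16*δ^2 with hd0def
  have hd00 : 0 < d0 := by rw [hd0def]; positivity
  have hc_lb : ∀ i, r^2/2 ≤ c i := fun i => by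
    simp only [hcdef]; linarith [hlam2 i]
  have hc_ub : ∀ i, c i ≤ r - 3/2*δ^2 := fun i => by
    simp only [hcdef, hrdef]; nlinarith [hlam1 i]
  have hc_pos : ∀ i, 0 < c i := fun i => lt_of_lt_of_le (by nlinarith) (hc_lb i)
  have hD_lb : ∀ i, d0 ≤ D i := by
    intro i
    have ha : 3/2*δ^2 ≤ r - c i := by linarith [hc_ub i]
    have hb2 : 5/8 ≤ r + c i := by nlinarith [hc_lb i]
    have hmul : (3/2*δ^2)*(5/8) ≤ (r - c i)*(r + c i) :=
      mul_le_mul ha hb2 (by norm_num) (by nlinarith [hc_pos i])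
    simp only [hDdef, hd0def]; nlinarith [hmul]
  have hD_pos : ∀ i, 0 < D i := fun i => lt_of_lt_of_le hd00 (hD_lb i)
  have hcD1 : ∀ i, (c i)^2 + D i ≤ 1 := fun i => by simp only [hDdef]; nlinarith
  have hc1 : ∀ i, (c i)^2 ≤ 1 := fun i => by nlinarith [hcD1 i, hD_pos i]
  have hd01 : d0 ≤ 1 := by rw [hd0def]; nlinarith
  have hs0 : 0 < Real.sqrt d0 := Real.sqrt_pos.mpr hd00
  have hs2 : Real.sqrt d0 ^ 2 = d0 := Real.sq_sqrt hd00.le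
  set P : ℕ → Fin dd → ℝ := fun t i => (x (t+1) i - c i * x t i)/Real.sqrt (D i) with hPdef
  set V : ℕ → ℝ := fun t => ∑ i, ((P t i)^2 + (x t i)^2) with hVdef
  set y : ℕ → ℝ := fun t => Real.sqrt (V t) with hydef
  have hV0 : ∀ t, 0 ≤ V t := fun t => Finset.sum_nonneg fun i _ => by positivity
  have hy0 : ∀ t, 0 ≤ y t := fun t => Real.sqrt_nonneg _
  have hy2 : ∀ t, (y t)^2 = V t := fun t => Real.sq_sqrt (hV0 t)
  have K2 : ∀ t i, ((x (t+1) i)^2 + (x t i)^2)/2 ≤ (P t i)^2 + (x t i)^2 := by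
    intro t i
    have h := hb_alg_lower (c i) (D i) (x (t+1) i) (x t i) (hD_pos i) (hcD1 i)
    simpa only [hPdef, div_pow, Real.sq_sqrt (hD_pos i).le] using h
  have K2sum : ∀ t, (∑ i, (x (t+1) i)^2) + (∑ i, (x t i)^2) ≤ 2 * V t := by
    intro t
    have h2 : (∑ i, ((x (t+1) i)^2 + (x t i)^2))/2 ≤ V t := by
      simp only [hVdef]
      rw [Finset.sum_div]
      exact Finset.sum_le_sum fun i _ => K2 t i
    rw [Finset.sum_add_distrib] at h2
    linarith
  have K3 : ∀ t, V t ≤ 3/d0 * ((∑ i, (x (t+1) i)^2) + (∑ i, (x t i)^2)) := by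
    intro t
    simp only [hVdef]
    calc ∑ i, ((P t i)^2 + (x t i)^2)
        ≤ ∑ i, (3/d0 * ((x (t+1) i)^2 + (x t i)^2)) := by
          refine Finset.sum_le_sum fun i _ => ?_
          have h := hb_alg_upper (c i) (D i) d0 (x (t+1) i) (x t i) hd00 (hD_lb i) (hc1 i) hd01
          simpa only [hPdef, div_pow, Real.sq_sqrt (hD_pos i).le] using h
      _ = 3/d0 * ((∑ i, (x (t+1) i)^2) + (∑ i, (x t i)^2)) := by
          rw [← Finset.mul_sum, Finset.sum_add_distrib]
  have hstep : ∀ t, y (t+1) ≤ r * y t + (2/Real.sqrt d0) * (y t)^2 := by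
    intro t
    set L : Fin dd → ℝ := fun i => (c i * x (t+1) i - r^2 * x t i)/Real.sqrt (D i) with hLdef
    set e : Fin dd → ℝ := fun i => (-(g t i))/Real.sqrt (D i) with hedef
    have hPsplit : ∀ i, P (t+1) i = L i + e i := by
      intro i
      simp only [hPdef, hLdef, hedef]
      rw [← add_div, hrecx t i]
      congr 1
      simp only [hcdef]
      ring
    have hVsplit : V (t+1) = ∑ i, ((L i + e i)^2 + (x (t+1) i)^2) := by
      simp only [hVdef]
      exact Finset.sum_congr rfl fun i _ => by rw [hPsplit i]
    have hL : ∑ i, ((L i)^2 + (x (t+1) i)^2) = r^2 * V t := by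
      simp only [hVdef, Finset.mul_sum]
      refine Finset.sum_congr rfl fun i _ => ?_
      simp only [hLdef, hPdef, hDdef]
      exact hb_alg_rot r (c i) (x (t+1) i) (x t i) (by simpa only [hDdef] using hD_pos i)
    have he : Real.sqrt (∑ i, (e i)^2) ≤ (2/Real.sqrt d0) * (y t)^2 := by
      have h1 : ∀ i, (e i)^2 ≤ (g t i)^2/d0 := by
        intro i
        have : (e i)^2 = (g t i)^2 / D i := by
          simp only [hedef, div_pow, neg_sq, Real.sq_sqrt (hD_pos i).le]
        rw [this]
        exact div_le_div_of_nonneg_left (sq_nonneg _) hd00 (hD_lb i)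
      have h2 : ∑ i, (e i)^2 ≤ (∑ i, (g t i)^2)/d0 := by
        rw [Finset.sum_div]; exact Finset.sum_le_sum fun i _ => h1 i
      have h4 : Real.sqrt (∑ i, (g t i)^2) ≤ 2 * (y t)^2 := by
        have hx0 : (0:ℝ) ≤ ∑ i, (x t i)^2 := by positivity
        calc Real.sqrt (∑ i, (g t i)^2) ≤ ∑ i, (x (t+1) i)^2 := hg t
          _ ≤ 2 * V t := by linarith [K2sum t]
          _ = 2*(y t)^2 := by rw [hy2]
      calc Real.sqrt (∑ i, (e i)^2) ≤ Real.sqrt ((∑ i, (g t i)^2)/d0) := Real.sqrt_le_sqrt h2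
        _ = Real.sqrt (∑ i, (g t i)^2) / Real.sqrt d0 := Real.sqrt_div (by positivity) _
        _ ≤ (2*(y t)^2)/Real.sqrt d0 := by gcongr
        _ = (2/Real.sqrt d0)*(y t)^2 := by ring
    calc y (t+1) = Real.sqrt (∑ i, ((L i + e i)^2 + (x (t+1) i)^2)) := by
          simp only [hydef, hVsplit]
      _ ≤ Real.sqrt (∑ i, ((L i)^2 + (x (t+1) i)^2)) + Real.sqrt (∑ i, (e i)^2) :=
          hb_minkowski L e _
      _ = Real.sqrt (r^2 * V t) + Real.sqrt (∑ i, (e i)^2) := by rw [hL]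
      _ = r * y t + Real.sqrt (∑ i, (e i)^2) := by
          rw [Real.sqrt_mul (sq_nonneg r), Real.sqrt_sq (by linarith : (0:ℝ) ≤ r)]
      _ ≤ r * y t + (2/Real.sqrt d0)*(y t)^2 := by linarith [he]
  set ε := Real.sqrt ((∑ i, (x 1 i)^2) + (∑ i, (x 0 i)^2)) with hεdef
  have hε0 : 0 ≤ ε := Real.sqrt_nonneg _
  have hε2 : ε^2 = (∑ i, (x 1 i)^2) + (∑ i, (x 0 i)^2) := Real.sq_sqrt (by positivity)
  have hy0ε : y 0 ≤ Real.sqrt (3/d0) * ε := by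
    have h := K3 0
    calc y 0 ≤ Real.sqrt (3/d0 * ε^2) := Real.sqrt_le_sqrt (by rw [hε2]; exact h)
      _ = Real.sqrt (3/d0) * ε := by rw [Real.sqrt_mul (by positivity), Real.sqrt_sq hε0]
  have hτ : y 0 ≤ δ * Real.sqrt d0 / 4 := by
    refine hy0ε.trans ?_
    have h3 : Real.sqrt (3/d0) * ε ≤ Real.sqrt (3/d0) * (8*δ^3/683) :=
      mul_le_mul_of_nonneg_left hinit (Real.sqrt_nonneg _)
    refine h3.trans ?_
    have ha0 : 0 ≤ Real.sqrt (3/d0) * (8*δ^3/683) := by positivity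
    have hb0 : 0 ≤ δ * Real.sqrt d0 / 4 := by positivity
    have hab : (Real.sqrt (3/d0) * (8*δ^3/683))^2 ≤ (δ * Real.sqrt d0 / 4)^2 := by
      have hb2 : (δ * Real.sqrt d0 / 4)^2 = δ^2 * d0 / 16 := by
        rw [div_pow, mul_pow, hs2]; norm_num
      rw [mul_pow, Real.sq_sqrt (by positivity : (0:ℝ) ≤ 3/d0), hb2, hd0def]
      rw [div_mul_eq_mul_div, div_le_div_iff₀ (by positivity) (by norm_num)]
      nlinarith [pow_pos hδ0 6]
    calc Real.sqrt (3/d0) * (8*δ^3/683) = Real.sqrt ((Real.sqrt (3/d0) * (8*δ^3/683))^2) :=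
          (Real.sqrt_sq ha0).symm
      _ ≤ Real.sqrt ((δ * Real.sqrt d0 / 4)^2) := Real.sqrt_le_sqrt hab
      _ = δ * Real.sqrt d0 / 4 := Real.sqrt_sq hb0
  have hρ0 : (0:ℝ) ≤ 1 - δ/2 := by linarith
  have hρ1 : 1 - δ/2 ≤ 1 := by linarith
  have hdecay : ∀ t, y t ≤ (1-δ/2)^t * y 0 := by
    intro t
    induction t with
    | zero => simp
    | succ n ih =>
      have hyn : y n ≤ δ * Real.sqrt d0 / 4 := by
        calc y n ≤ (1-δ/2)^n * y 0 := ih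
          _ ≤ 1 * y 0 := mul_le_mul_of_nonneg_right (pow_le_one₀ hρ0 hρ1) (hy0 0)
          _ = y 0 := one_mul _
          _ ≤ _ := hτ
      have hsq : (y n)^2 ≤ (δ*Real.sqrt d0/4) * y n := by
        rw [sq]; exact mul_le_mul_of_nonneg_right hyn (hy0 n)
      calc y (n+1) ≤ r * y n + (2/Real.sqrt d0) * (y n)^2 := hstep n
        _ ≤ r * y n + (2/Real.sqrt d0) * ((δ*Real.sqrt d0/4) * y n) := by
            have h20 : (0:ℝ) ≤ 2/Real.sqrt d0 := by positivity
            have := mul_le_mul_of_nonneg_left hsq h20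
            linarith
        _ = (r + δ/2) * y n := by
            have hkey : 2/Real.sqrt d0 * (δ*Real.sqrt d0/4) = δ/2 := by
              field_simp [hs0.ne']
              ring
            rw [← mul_assoc, hkey]
            ring
        _ = (1-δ/2) * y n := by rw [hrdef]; ring_nf
        _ ≤ (1-δ/2) * ((1-δ/2)^n * y 0) := mul_le_mul_of_nonneg_left ih hρ0
        _ = (1-δ/2)^(n+1) * y 0 := by ring
  intro t
  have h2 : Real.sqrt ((∑ i, (x (t+2) i)^2) + (∑ i, (x (t+1) i)^2)) ≤ Real.sqrt 2 * y (t+1) := by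
    calc Real.sqrt ((∑ i, (x (t+2) i)^2) + (∑ i, (x (t+1) i)^2))
        ≤ Real.sqrt (2 * V (t+1)) := Real.sqrt_le_sqrt (K2sum (t+1))
      _ = Real.sqrt 2 * y (t+1) := by rw [Real.sqrt_mul (by norm_num)]
  have h4 : Real.sqrt 2 * Real.sqrt (3/d0) ≤ 4/δ := by
    have ha0 : 0 ≤ Real.sqrt 2 * Real.sqrt (3/d0) := by positivity
    have hb0 : (0:ℝ) ≤ 4/δ := by positivity
    have hab : (Real.sqrt 2 * Real.sqrt (3/d0))^2 ≤ (4/δ)^2 := by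
      rw [mul_pow, Real.sq_sqrt (by norm_num : (0:ℝ) ≤ 2),
        Real.sq_sqrt (by positivity : (0:ℝ) ≤ 3/d0), hd0def, div_pow]
      rw [mul_div_assoc', div_le_div_iff₀ (by positivity) (by positivity)]
      nlinarith [pow_pos hδ0 2, pow_pos hδ0 4]
    calc Real.sqrt 2 * Real.sqrt (3/d0) = Real.sqrt ((Real.sqrt 2 * Real.sqrt (3/d0))^2) :=
          (Real.sqrt_sq ha0).symm
      _ ≤ Real.sqrt ((4/δ)^2) := Real.sqrt_le_sqrt hab
      _ = 4/δ := Real.sqrt_sq hb0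
  calc Real.sqrt ((∑ i, (x (t+2) i)^2) + (∑ i, (x (t+1) i)^2)) ≤ Real.sqrt 2 * y (t+1) := h2
    _ ≤ Real.sqrt 2 * ((1-δ/2)^(t+1) * y 0) :=
        mul_le_mul_of_nonneg_left (hdecay (t+1)) (Real.sqrt_nonneg 2)
    _ ≤ Real.sqrt 2 * ((1-δ/2)^(t+1) * (Real.sqrt (3/d0) * ε)) := by
        have h := mul_le_mul_of_nonneg_left hy0ε (pow_nonneg hρ0 (t+1))
        exact mul_le_mul_of_nonneg_left h (Real.sqrt_nonneg 2)
    _ = (1-δ/2)^(t+1) * ((Real.sqrt 2 * Real.sqrt (3/d0)) * ε) := by ring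
    _ ≤ (1-δ/2)^(t+1) * ((4/δ) * ε) := by
        refine mul_le_mul_of_nonneg_left ?_ (pow_nonneg hρ0 (t+1))
        exact mul_le_mul_of_nonneg_right h4 hε0
    _ = (1-δ/2)^(t+1) * (4/δ) * ε := by ring


private lemma hb_le_of_small (a b C : ℝ) (hC : 0 ≤ C) (h : ∀ t : ℝ, 0 < t → a ≤ b + C * t) :
    a ≤ b := by
  by_contra hlt
  push_neg at hlt
  have hab : 0 < a - b := by linarith
  have h2C : (0:ℝ) < 2*C+2 := by linarith
  have hkey := h ((a-b)/(2*C+2)) (div_pos hab h2C)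
  have hCle : C * ((a-b)/(2*C+2)) ≤ (a-b)/2 := by
    rw [mul_div_assoc', div_le_div_iff₀ h2C (by norm_num)]
    nlinarith
  linarith

open scoped RealInnerProductSpace

set_option maxHeartbeats 4000000 in
/-- Non-asymptotic accelerated local linear rate of Polyak's heavy-ball method for
`μ`-strongly convex, `α`-smooth, twice continuously differentiable `f` with
`α`-Lipschitz Hessian. Here `W (t+1)` plays the role of `w_t`
(so `W 0 = w₋₁`, `W 1 = w₀`). -/
theorem heavy_ball_local_accelerated_rate {d : ℕ}
    (f : EuclideanSpace ℝ (Fin d) → ℝ)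
    (hf : ContDiff ℝ 2 f)
    (μ αs : ℝ) (hμ : 0 < μ) (hμα : μ ≤ αs)
    -- `μ`-strong convexity
    (hsc : ∀ x z : EuclideanSpace ℝ (Fin d),
      f x + ⟪gradient f x, z - x⟫ + (μ/2) * ‖z - x‖^2 ≤ f z)
    -- `α`-smoothness
    (hsmooth : ∀ x z : EuclideanSpace ℝ (Fin d),
      ‖gradient f x - gradient f z‖ ≤ αs * ‖x - z‖)
    -- the Hessian is `α`-Lipschitz
    (hhess : ∀ x z : EuclideanSpace ℝ (Fin d),
      ‖fderiv ℝ (gradient f) x - fderiv ℝ (gradient f) z‖ ≤ αs * ‖x - z‖)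
    (κ : ℝ) (hκ : κ = αs / μ)
    (wstar : EuclideanSpace ℝ (Fin d))
    -- `w*` is the (unique) minimizer of `f`
    (hwstar : ∀ w, f wstar ≤ f w)
    (η β : ℝ) (hη : η = 1 / αs) (hβ : β = (1 - 1/(2 * Real.sqrt κ))^2)
    (W : ℕ → EuclideanSpace ℝ (Fin d))
    -- heavy-ball iteration `w_{t+1} = w_t - η ∇f(w_t) + β (w_t - w_{t-1})`
    (hrec : ∀ t : ℕ,
      W (t+2) = W (t+1) - η • gradient f (W (t+1)) + β • (W (t+1) - W t))
    -- the initial points are close enough to `w*`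
    (hinit : Real.sqrt (‖W 1 - wstar‖^2 + ‖W 0 - wstar‖^2)
      ≤ 1 / (683 * (κ * Real.sqrt κ))) :
    ∀ t : ℕ,
      Real.sqrt (‖W (t+2) - wstar‖^2 + ‖W (t+1) - wstar‖^2)
        ≤ (1 - 1/(4 * Real.sqrt κ))^(t+1) * (8 * Real.sqrt κ) *
          Real.sqrt (‖W 1 - wstar‖^2 + ‖W 0 - wstar‖^2) := by
  have hα : 0 < αs := lt_of_lt_of_le hμ hμα
  have hη0 : 0 < η := by rw [hη]; positivity
  have hκ1 : 1 ≤ κ := by rw [hκ, le_div_iff₀ hμ]; linarith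
  have hκ0 : 0 < κ := lt_of_lt_of_le one_pos hκ1
  have hsκ1 : 1 ≤ Real.sqrt κ := by
    rw [show (1:ℝ) = Real.sqrt 1 from Real.sqrt_one.symm]
    exact Real.sqrt_le_sqrt hκ1
  have hsκ0 : 0 < Real.sqrt κ := lt_of_lt_of_le one_pos hsκ1
  have hsκ2 : Real.sqrt κ ^ 2 = κ := Real.sq_sqrt hκ0.le
  set δ : ℝ := 1/(2*Real.sqrt κ) with hδdef
  have hδ0 : 0 < δ := by rw [hδdef]; positivity
  have hδ2 : δ ≤ 1/2 := by
    rw [hδdef, div_le_div_iff₀ (by positivity) (by norm_num)]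
    linarith
  have hβδ : β = (1-δ)^2 := by rw [hβ, hδdef]
  have hκδ : 4*δ^2 = 1/κ := by
    rw [hδdef, div_pow]
    field_simp
    linarith [hsκ2]
  -- basic differentiability
  have hf1 : ContDiff ℝ 1 (fderiv ℝ f) := hf.fderiv_right (by norm_num)
  have hfdiff : Differentiable ℝ f := hf.differentiable (by norm_num)
  set iso : StrongDual ℝ (EuclideanSpace ℝ (Fin d)) ≃ₗᵢ[ℝ] EuclideanSpace ℝ (Fin d) :=
    (InnerProductSpace.toDual ℝ (EuclideanSpace ℝ (Fin d))).symm with hiso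
  have hgrad_eq : gradient f = (⇑iso ∘ fderiv ℝ f) := rfl
  have hgdiff : Differentiable ℝ (gradient f) := by
    rw [hgrad_eq]
    exact iso.differentiable.comp (hf1.differentiable one_ne_zero)
  have hmin : IsLocalMin f wstar := Filter.Eventually.of_forall fun w => hwstar w
  have hg0 : gradient f wstar = 0 := by
    have h0 : fderiv ℝ f wstar = 0 := hmin.fderiv_eq_zero
    rw [hgrad_eq]; simp [Function.comp, h0]
  set H : EuclideanSpace ℝ (Fin d) →L[ℝ] EuclideanSpace ℝ (Fin d) :=
    fderiv ℝ (gradient f) wstar with hHdef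
  have hH_eq : ∀ u, H u = iso (fderiv ℝ (fderiv ℝ f) wstar u) := by
    intro u
    have hc : fderiv ℝ (⇑iso ∘ fderiv ℝ f) wstar
        = (iso : StrongDual ℝ (EuclideanSpace ℝ (Fin d)) →L[ℝ]
            EuclideanSpace ℝ (Fin d)).comp (fderiv ℝ (fderiv ℝ f) wstar) :=
      iso.comp_fderiv
    rw [hHdef, hgrad_eq, hc]
    rfl
  have hf''symm : ∀ u v, fderiv ℝ (fderiv ℝ f) wstar u v
      = fderiv ℝ (fderiv ℝ f) wstar v u :=
    second_derivative_symmetric (fun y => (hfdiff y).hasFDerivAt)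
      ((hf1.differentiable one_ne_zero wstar).hasFDerivAt)
  have hinnerH : ∀ u v, ⟪H u, v⟫ = fderiv ℝ (fderiv ℝ f) wstar u v := by
    intro u v
    rw [hH_eq u]
    exact InnerProductSpace.toDual_symm_apply
  have hHsym : ∀ u v, ⟪H u, v⟫ = ⟪u, H v⟫ := by
    intro u v
    rw [hinnerH, real_inner_comm (H v) u, hinnerH, hf''symm v u]
  -- residual bound
  have hres : ∀ w, ‖gradient f w - H (w - wstar)‖ ≤ αs * ‖w - wstar‖^2 := by
    intro w
    have hconv : Convex ℝ (Metric.closedBall wstar ‖w - wstar‖) := convex_closedBall _ _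
    have hwmem : w ∈ Metric.closedBall wstar ‖w - wstar‖ := by
      simp [Metric.mem_closedBall, dist_eq_norm]
    have hw0mem : wstar ∈ Metric.closedBall wstar ‖w - wstar‖ :=
      Metric.mem_closedBall_self (norm_nonneg _)
    have hdiffs : ∀ z ∈ Metric.closedBall wstar ‖w - wstar‖,
        DifferentiableAt ℝ (fun z => gradient f z - H z) z :=
      fun z _ => (hgdiff z).sub H.differentiableAt
    have hbound : ∀ z ∈ Metric.closedBall wstar ‖w - wstar‖,
        ‖fderiv ℝ (fun z => gradient f z - H z) z‖ ≤ αs * ‖w - wstar‖ := by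
      intro z hz
      have hfd : fderiv ℝ (fun z => gradient f z - H z) z = fderiv ℝ (gradient f) z - H := by
        rw [fderiv_fun_sub (hgdiff z) H.differentiableAt, H.fderiv]
      rw [hfd]
      calc ‖fderiv ℝ (gradient f) z - H‖ ≤ αs * ‖z - wstar‖ := hhess z wstar
        _ ≤ αs * ‖w - wstar‖ := by
            refine mul_le_mul_of_nonneg_left ?_ hα.le
            rw [← dist_eq_norm]
            exact Metric.mem_closedBall.mp hz
    have key := Convex.norm_image_sub_le_of_norm_fderiv_le hdiffs hbound hconv hw0mem hwmem
    have heq : (gradient f w - H w) - (gradient f wstar - H wstar)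
        = gradient f w - H (w - wstar) := by
      rw [hg0, map_sub]; abel
    rw [heq] at key
    calc ‖gradient f w - H (w - wstar)‖ ≤ αs*‖w - wstar‖*‖w - wstar‖ := key
      _ = αs * ‖w - wstar‖^2 := by ring
  -- eigenvalue-type bounds for H
  have hH_le : ∀ u, ‖H u‖ ≤ αs * ‖u‖ := by
    intro u
    apply hb_le_of_small _ _ (αs * ‖u‖^2) (by positivity)
    intro t ht
    have hw : (wstar + t • u) - wstar = t • u := add_sub_cancel_left _ _
    have htu : ‖t • u‖ = t * ‖u‖ := by
      rw [norm_smul, Real.norm_eq_abs, abs_of_pos ht]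
    have h1 := hres (wstar + t • u)
    rw [hw, htu] at h1
    have h2 := hsmooth (wstar + t • u) wstar
    rw [hg0, sub_zero, hw, htu] at h2
    have h3 : ‖H (t • u)‖ ≤ ‖gradient f (wstar + t • u)‖
        + ‖gradient f (wstar + t • u) - H (t • u)‖ := by
      calc ‖H (t•u)‖
          = ‖gradient f (wstar + t•u) - (gradient f (wstar + t•u) - H (t•u))‖ := by
            rw [sub_sub_cancel]
        _ ≤ _ := norm_sub_le _ _
    have h5 : ‖H (t • u)‖ = t * ‖H u‖ := by
      rw [map_smul, norm_smul, Real.norm_eq_abs, abs_of_pos ht]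
    have h4 : t * ‖H u‖ ≤ t * (αs * ‖u‖ + αs * ‖u‖^2 * t) := by
      rw [h5] at h3
      calc t * ‖H u‖ ≤ ‖gradient f (wstar + t•u)‖
            + ‖gradient f (wstar + t•u) - H (t•u)‖ := h3
        _ ≤ αs * (t*‖u‖) + αs * (t*‖u‖)^2 := add_le_add h2 h1
        _ = t * (αs*‖u‖ + αs*‖u‖^2*t) := by ring
    exact le_of_mul_le_mul_left h4 ht
  have hmono : ∀ xx zz : EuclideanSpace ℝ (Fin d),
      μ * ‖xx - zz‖^2 ≤ ⟪gradient f xx - gradient f zz, xx - zz⟫ := by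
    intro xx zz
    have h1 := hsc xx zz
    have h2 := hsc zz xx
    have e1 : ⟪gradient f xx, zz - xx⟫ = -⟪gradient f xx, xx - zz⟫ := by
      rw [show zz - xx = -(xx - zz) from (neg_sub _ _).symm, inner_neg_right]
    rw [e1, norm_sub_rev zz xx] at h1
    rw [inner_sub_left]
    linarith
  have hH_lb : ∀ u, μ * ‖u‖^2 ≤ ⟪H u, u⟫ := by
    intro u
    apply hb_le_of_small _ _ (αs * ‖u‖^3) (by positivity)
    intro t ht
    have hw : (wstar + t • u) - wstar = t • u := add_sub_cancel_left _ _
    have htu : ‖t • u‖ = t * ‖u‖ := by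
      rw [norm_smul, Real.norm_eq_abs, abs_of_pos ht]
    have h1 := hmono (wstar + t • u) wstar
    rw [hw, hg0, sub_zero, htu] at h1
    have hres1 := hres (wstar + t • u)
    rw [hw, htu] at hres1
    have h2 : ⟪gradient f (wstar + t•u), t•u⟫
        ≤ ⟪H (t•u), t•u⟫ + αs*(t*‖u‖)^2 * (t*‖u‖) := by
      have hcs : ⟪gradient f (wstar + t•u) - H (t•u), t•u⟫
          ≤ αs*(t*‖u‖)^2*(t*‖u‖) := by
        calc ⟪gradient f (wstar + t•u) - H (t•u), t•u⟫
            ≤ ‖gradient f (wstar + t•u) - H (t•u)‖ * ‖t•u‖ := real_inner_le_norm _ _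
          _ ≤ αs*(t*‖u‖)^2*(t*‖u‖) := by
              rw [htu]
              exact mul_le_mul_of_nonneg_right hres1 (by positivity)
      rw [inner_sub_left] at hcs
      linarith
    have h3 : ⟪H (t•u), t•u⟫ = t^2 * ⟪H u, u⟫ := by
      rw [map_smul, real_inner_smul_left, real_inner_smul_right]; ring
    rw [h3] at h2
    have h4 : t^2 * (μ * ‖u‖^2) ≤ t^2 * (⟪H u, u⟫ + αs * ‖u‖^3 * t) := by nlinarith
    exact le_of_mul_le_mul_left h4 (by positivity)
  -- spectral decomposition
  have hHsymL : (↑H : EuclideanSpace ℝ (Fin d) →ₗ[ℝ] EuclideanSpace ℝ (Fin d)).IsSymmetric := by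
    intro u v
    simpa using hHsym u v
  have hdim : Module.finrank ℝ (EuclideanSpace ℝ (Fin d)) = d := finrank_euclideanSpace_fin
  set b := hHsymL.eigenvectorBasis hdim with hbdef
  set lam' := hHsymL.eigenvalues hdim with hlamdef
  have heig : ∀ i, H (b i) = lam' i • b i := by
    intro i
    have h := hHsymL.apply_eigenvectorBasis hdim i
    rw [hbdef, hlamdef]
    exact_mod_cast h
  have hbnorm : ∀ i, ‖b i‖ = 1 := fun i => b.orthonormal.1 i
  have hlam_lb : ∀ i, μ ≤ lam' i := by
    intro i
    have h := hH_lb (b i)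
    rw [heig i, real_inner_smul_left, real_inner_self_eq_norm_sq, hbnorm i] at h
    simpa using h
  have hlam_ub : ∀ i, lam' i ≤ αs := by
    intro i
    have h := hH_le (b i)
    rw [heig i, norm_smul, hbnorm i, Real.norm_eq_abs] at h
    simp only [mul_one] at h
    exact (le_abs_self _).trans h
  -- coordinates
  set xx : ℕ → Fin d → ℝ := fun t i => b.repr (W t - wstar) i with hxxdef
  set R : ℕ → EuclideanSpace ℝ (Fin d) := fun t => gradient f (W (t+1)) - H (W (t+1) - wstar)
    with hRdef
  set gg : ℕ → Fin d → ℝ := fun t i => η * b.repr (R t) i with hggdef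
  have hparse : ∀ v : EuclideanSpace ℝ (Fin d), ∑ i, (b.repr v i)^2 = ‖v‖^2 := by
    intro v
    calc ∑ i, (b.repr v i)^2 = ∑ i, ‖b.repr v i‖^2 := by
          simp [Real.norm_eq_abs, sq_abs]
      _ = ‖b.repr v‖^2 := by
          rw [EuclideanSpace.norm_eq, Real.sq_sqrt (by positivity)]
      _ = ‖v‖^2 := by rw [LinearIsometryEquiv.norm_map]
  have hreprH : ∀ (v : EuclideanSpace ℝ (Fin d)) i, b.repr (H v) i = lam' i * b.repr v i := by
    intro v i
    rw [OrthonormalBasis.repr_apply_apply, OrthonormalBasis.repr_apply_apply,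
      ← hHsym (b i) v, heig i, real_inner_smul_left]
  have hrecx : ∀ t i, xx (t+2) i
      = (1 + (1-δ)^2 - (η * lam' i)) * xx (t+1) i - (1-δ)^2 * xx t i - gg t i := by
    intro t i
    have hW : W (t+2) - wstar = ((W (t+1) - wstar) - η • (H (W (t+1) - wstar) + R t))
        + β • ((W (t+1) - wstar) - (W t - wstar)) := by
      rw [hrec t, hRdef]
      module
    have h := congrArg (fun v => b.repr v i) hW
    simp only [map_add, map_sub, map_smul, PiLp.add_apply, PiLp.sub_apply, PiLp.smul_apply,
      smul_eq_mul] at h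
    simp only [hreprH] at h
    simp only [hxxdef, hggdef, map_sub, PiLp.sub_apply, ← hβδ]
    linear_combination h
  have hggb : ∀ t, Real.sqrt (∑ i, (gg t i)^2) ≤ ∑ i, (xx (t+1) i)^2 := by
    intro t
    have h1 : ∑ i, (gg t i)^2 = η^2 * ‖R t‖^2 := by
      simp only [hggdef, mul_pow]
      rw [← Finset.mul_sum, hparse]
    have h2 : ‖R t‖ ≤ αs * ‖W (t+1) - wstar‖^2 := hres (W (t+1))
    have h3 : Real.sqrt (∑ i, (gg t i)^2) = η * ‖R t‖ := by
      rw [h1, Real.sqrt_mul (by positivity), Real.sqrt_sq hη0.le, Real.sqrt_sq (norm_nonneg _)]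
    rw [h3]
    calc η * ‖R t‖ ≤ η * (αs * ‖W (t+1) - wstar‖^2) := mul_le_mul_of_nonneg_left h2 hη0.le
      _ = ‖W (t+1) - wstar‖^2 := by rw [hη]; field_simp
      _ = ∑ i, (xx (t+1) i)^2 := by simp only [hxxdef]; rw [hparse]
  -- eigenvalue bounds in normalized form
  have hlam1 : ∀ i, 4*δ^2 ≤ η * lam' i := by
    intro i
    rw [hκδ, hκ, one_div_div, hη, one_div_mul_eq_div, div_le_div_iff₀ hα hα]
    have := hlam_lb i
    nlinarith
  have hlam2 : ∀ i, η * lam' i ≤ 1 := by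
    intro i
    rw [hη, one_div_mul_eq_div, div_le_one hα]
    exact hlam_ub i
  -- initial condition in coordinates
  have hsum_eq : ∀ s : ℕ, ‖W s - wstar‖^2 = ∑ i, (xx s i)^2 := by
    intro s
    simp only [hxxdef]
    rw [hparse]
  have hinit' : Real.sqrt ((∑ i, (xx 1 i)^2) + (∑ i, (xx 0 i)^2)) ≤ 8*δ^3/683 := by
    rw [← hsum_eq 1, ← hsum_eq 0]
    refine hinit.trans (le_of_eq ?_)
    rw [hδdef]
    field_simp
    linear_combination 8 * hsκ2
  have hmain := hb_core δ hδ0 hδ2 (fun i => η * lam' i) hlam1 hlam2 xx gg hrecx hggb hinit'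
  intro t
  have hρ : 1 - 1/(4*Real.sqrt κ) = 1 - δ/2 := by
    rw [hδdef]
    ring
  have h8 : 8 * Real.sqrt κ = 4/δ := by
    rw [hδdef]
    field_simp
    ring
  rw [hsum_eq (t+2), hsum_eq (t+1), hsum_eq 1, hsum_eq 0, hρ, h8]
  exact hmain t
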